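/- Let $\mathcal{X} \subset \mathbb{R}^d$ be compact and convex with nonempty interior, and let $\Psi : \mathbb{R}^d \to \mathbb{R}_{\ge 0}$ be continuous at $\bm{0}$ with $\Psi(\bm{0}) > 0$. Fix $\ell_0 > 0$. Then there exist constants $h_0, w_0 > 0$ such that for all $t \ge 1$, all $\ell \le \ell_0$, and all finite point sets $\bm{X}_t = \{\bm{x}_1,\dots,\bm{x}_t\} \subset \mathcal{X}$ with fill distance $h_{\mathcal{X},\bm{X}_t} \le h_0 \ell$, the kernel density $W_t(\bm{x}) = \sum_{i=1}^t \Psi((\bm{x}-\bm{x}_i)/\ell)$ satisfies $W_t(\bm{x}) \ge w_0 \, \ell^d \, h_{\mathcal{X},\bm{X}_t}^{-d}$ for every $\bm{x} \in \mathcal{X}$. -/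

import Mathlib

open Filter

/-- Lower bound on the kernel density in terms of the fill distance: if the fill
distance is small compared to the bandwidth, the kernel density is at least
`w0 * ℓ^d / h^d` everywhere on `X`. -/
theorem kde_lower_bound_by_fill_distance
    (d : ℕ) (X : Set (EuclideanSpace ℝ (Fin d)))
    (hXc : IsCompact X) (hXconv : Convex ℝ X) (hXint : (interior X).Nonempty)
    (Ψ : EuclideanSpace ℝ (Fin d) → ℝ)
    (hΨnn : ∀ z, 0 ≤ Ψ z) (hΨ0 : 0 < Ψ 0) (hΨcont : ContinuousAt Ψ 0)
    (ℓ0 : ℝ) (hℓ0 : 0 < ℓ0) :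
    ∃ h0 w0 : ℝ, 0 < h0 ∧ 0 < w0 ∧
      ∀ (t : ℕ), 1 ≤ t →
        ∀ (ℓ : ℝ), 0 < ℓ → ℓ ≤ ℓ0 →
          ∀ xs : Fin t → EuclideanSpace ℝ (Fin d), (∀ i, xs i ∈ X) →
            (⨆ z : X, ⨅ i, ‖z.1 - xs i‖) ≤ h0 * ℓ →
              ∀ x ∈ X,
                w0 * ℓ ^ d / (⨆ z : X, ⨅ i, ‖z.1 - xs i‖) ^ d
                  ≤ ∑ i, Ψ (ℓ⁻¹ • (x - xs i)) := by
  classical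
  have hXne : X.Nonempty := hXint.mono interior_subset
  -- degenerate dimension
  rcases Nat.eq_zero_or_pos d with hd | hd
  · subst hd
    refine ⟨1, Ψ 0, one_pos, hΨ0, ?_⟩
    intro t ht ℓ hℓ hℓle xs hxs hfill x hx
    have hNE : Nonempty (Fin t) := Fin.pos_iff_nonempty.mp ht
    simp only [pow_zero, div_one, mul_one]
    have harg : (ℓ⁻¹ • (x - xs ⟨0, ht⟩) : EuclideanSpace ℝ (Fin 0)) = 0 :=
      Subsingleton.elim _ _
    calc Ψ 0 = Ψ (ℓ⁻¹ • (x - xs ⟨0, ht⟩)) := by rw [harg]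
      _ ≤ ∑ i, Ψ (ℓ⁻¹ • (x - xs i)) :=
        Finset.single_le_sum (f := fun i => Ψ (ℓ⁻¹ • (x - xs i)))
          (fun i _ => hΨnn _) (Finset.mem_univ _)
  -- get ε from continuity at 0
  have hev : ∀ᶠ z in nhds 0, Ψ 0 / 2 < Ψ z :=
    hΨcont.eventually (eventually_gt_nhds (half_lt_self hΨ0))
  obtain ⟨ε', hε', hε'Ψ⟩ := Metric.eventually_nhds_iff_ball.mp hev
  set ε : ℝ := ε' / 2 with hεdef
  have hε : 0 < ε := by positivity
  have hεΨ : ∀ z : EuclideanSpace ℝ (Fin d), ‖z‖ ≤ ε → Ψ 0 / 2 ≤ Ψ z := by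
    intro z hz
    refine (hε'Ψ z ?_).le
    rw [Metric.mem_ball, dist_zero_right]
    linarith
  set c : ℝ := Ψ 0 / 2 with hcdef
  have hc : 0 < c := by positivity
  -- diameter bound
  obtain ⟨R, hR⟩ := Metric.isBounded_iff.mp hXc.isBounded
  set D : ℝ := max R 1 with hDdef
  have hD : 0 < D := lt_of_lt_of_le one_pos (le_max_right _ _)
  have hdistD : ∀ y ∈ X, ∀ z ∈ X, ‖y - z‖ ≤ D := by
    intro y hy z hz
    have := hR hy hz
    rw [dist_eq_norm] at this
    exact this.trans (le_max_left _ _)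
  -- volumes
  set VX : ℝ := (MeasureTheory.volume X).toReal with hVXdef
  set VB : ℝ := (MeasureTheory.volume
      (Metric.ball (0 : EuclideanSpace ℝ (Fin d)) 1)).toReal with hVBdef
  have hVXpos : 0 < VX :=
    ENNReal.toReal_pos
      (MeasureTheory.Measure.measure_pos_of_nonempty_interior _ hXint).ne'
      hXc.measure_lt_top.ne
  have hVBpos : 0 < VB :=
    ENNReal.toReal_pos (Metric.measure_ball_pos MeasureTheory.volume 0 one_pos).ne'
      MeasureTheory.measure_ball_lt_top.ne
  set k : ℝ := min (1 / ℓ0) (ε / (2 * D)) with hkdef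
  have hk : 0 < k := lt_min (by positivity) (by positivity)
  refine ⟨ε / 2, c * k ^ d * VX / VB, by positivity, by positivity, ?_⟩
  intro t ht ℓ hℓ hℓle xs hxs hfill x hx
  have hNE : Nonempty (Fin t) := Fin.pos_iff_nonempty.mp ht
  set h : ℝ := ⨆ z : X, ⨅ i, ‖z.1 - xs i‖ with hhdef
  -- boundedness of the inner inf family
  have hbdd : BddAbove (Set.range fun z : X => ⨅ i, ‖z.1 - xs i‖) := by
    refine ⟨D, ?_⟩
    rintro _ ⟨z, rfl⟩
    have h1 : (⨅ i, ‖z.1 - xs i‖) ≤ ‖z.1 - xs ⟨0, ht⟩‖ :=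
      ciInf_le (Finite.bddBelow_range _) (⟨0, ht⟩ : Fin t)
    exact h1.trans (hdistD _ z.2 _ (hxs ⟨0, ht⟩))
  have hhnn : 0 ≤ h := by
    obtain ⟨z, hz⟩ := hXne
    have h1 : (0 : ℝ) ≤ ⨅ i, ‖(⟨z, hz⟩ : X).1 - xs i‖ :=
      le_ciInf fun i => norm_nonneg _
    exact h1.trans (le_ciSup hbdd (⟨z, hz⟩ : X))
  rcases eq_or_lt_of_le hhnn with hh0 | hhpos
  · rw [← hh0, zero_pow (by omega), div_zero]
    exact Finset.sum_nonneg fun i _ => hΨnn _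
  -- covering property
  have hcov : ∀ z ∈ X, ∃ i, ‖z - xs i‖ ≤ h := by
    intro z hz
    obtain ⟨i, hi⟩ := exists_eq_ciInf_of_finite (f := fun i => ‖z - xs i‖)
    exact ⟨i, hi.trans_le (le_ciSup hbdd (⟨z, hz⟩ : X))⟩
  set S : Finset (Fin t) := Finset.univ.filter (fun i => ‖xs i - x‖ ≤ ε * ℓ) with hSdef
  -- lower bound the sum by c * #S
  have step1 : c * S.card ≤ ∑ i, Ψ (ℓ⁻¹ • (x - xs i)) := by
    calc c * S.card = ∑ _i ∈ S, c := by rw [Finset.sum_const, nsmul_eq_mul, mul_comm]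
      _ ≤ ∑ i ∈ S, Ψ (ℓ⁻¹ • (x - xs i)) := by
          refine Finset.sum_le_sum fun i hi => ?_
          apply hεΨ
          rw [norm_smul, norm_inv, Real.norm_eq_abs, abs_of_pos hℓ]
          have hnx : ‖x - xs i‖ ≤ ε * ℓ := by
            rw [norm_sub_rev]; exact (Finset.mem_filter.mp hi).2
          calc ℓ⁻¹ * ‖x - xs i‖ ≤ ℓ⁻¹ * (ε * ℓ) := by
                exact mul_le_mul_of_nonneg_left hnx (by positivity)
            _ = ε := by field_simp
      _ ≤ ∑ i, Ψ (ℓ⁻¹ • (x - xs i)) :=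
          Finset.sum_le_sum_of_subset_of_nonneg (Finset.subset_univ _)
            (fun i _ _ => hΨnn _)
  -- volume counting
  set r : ℝ := ε * ℓ / 2 with hrdef
  have hr : 0 < r := by positivity
  set lam : ℝ := min 1 (r / D) with hlamdef
  have hlampos : 0 < lam := lt_min one_pos (by positivity)
  have hlam1 : lam ≤ 1 := min_le_left _ _
  have key : ENNReal.ofReal (lam ^ d) * MeasureTheory.volume X ≤
      (S.card : ENNReal) * (ENNReal.ofReal (h ^ d) *
        MeasureTheory.volume (Metric.ball (0 : EuclideanSpace ℝ (Fin d)) 1)) := by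
    have hTX : AffineMap.homothety x lam '' X ⊆ X := by
      rintro _ ⟨y, hy, rfl⟩
      rw [AffineMap.homothety_apply]
      have heq : (lam • (y -ᵥ x) +ᵥ x : EuclideanSpace ℝ (Fin d))
          = (1 - lam) • x + lam • y := by
        simp only [vsub_eq_sub, vadd_eq_add]
        module
      rw [heq]
      exact hXconv hx hy (by linarith) hlampos.le (by ring)
    have hTball : AffineMap.homothety x lam '' X ⊆ Metric.closedBall x r := by
      rintro _ ⟨y, hy, rfl⟩
      rw [AffineMap.homothety_apply, Metric.mem_closedBall, dist_eq_norm]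
      simp only [vsub_eq_sub, vadd_eq_add, add_sub_cancel_right]
      rw [norm_smul, Real.norm_eq_abs, abs_of_pos hlampos]
      calc lam * ‖y - x‖ ≤ (r / D) * D :=
            mul_le_mul (min_le_right _ _) (hdistD _ hy _ hx) (norm_nonneg _)
              (by positivity)
        _ = r := by field_simp
    have hIcov : X ∩ Metric.closedBall x r ⊆ ⋃ i ∈ S, Metric.closedBall (xs i) h := by
      rintro y ⟨hyX, hyB⟩
      obtain ⟨i, hi⟩ := hcov y hyX
      have hiS : i ∈ S := by
        refine Finset.mem_filter.mpr ⟨Finset.mem_univ _, ?_⟩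
        have h1 : ‖xs i - x‖ ≤ ‖xs i - y‖ + ‖y - x‖ := by
          have := norm_sub_le_norm_sub_add_norm_sub (xs i) y x
          linarith [this]
        have h2 : ‖xs i - y‖ ≤ h := by rw [norm_sub_rev]; exact hi
        have h3 : ‖y - x‖ ≤ r := by
          rw [← dist_eq_norm]; exact Metric.mem_closedBall.mp hyB
        have h4 : h ≤ ε / 2 * ℓ := hfill
        calc ‖xs i - x‖ ≤ h + r := by linarith
          _ ≤ ε / 2 * ℓ + ε * ℓ / 2 := by linarith
          _ = ε * ℓ := by ring
      refine Set.mem_biUnion hiS ?_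
      rw [Metric.mem_closedBall, dist_eq_norm]
      exact hi
    calc ENNReal.ofReal (lam ^ d) * MeasureTheory.volume X
        = ENNReal.ofReal (|lam ^ d|) * MeasureTheory.volume X := by
          rw [abs_of_pos (pow_pos hlampos d)]
      _ = MeasureTheory.volume (AffineMap.homothety x lam '' X) := by
          rw [MeasureTheory.Measure.addHaar_image_homothety,
            finrank_euclideanSpace_fin]
      _ ≤ MeasureTheory.volume (X ∩ Metric.closedBall x r) :=
          MeasureTheory.measure_mono (Set.subset_inter hTX hTball)
      _ ≤ MeasureTheory.volume (⋃ i ∈ S, Metric.closedBall (xs i) h) :=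
          MeasureTheory.measure_mono hIcov
      _ ≤ ∑ i ∈ S, MeasureTheory.volume (Metric.closedBall (xs i) h) :=
          MeasureTheory.measure_biUnion_finset_le _ _
      _ = (S.card : ENNReal) * (ENNReal.ofReal (h ^ d) *
            MeasureTheory.volume (Metric.ball (0 : EuclideanSpace ℝ (Fin d)) 1)) := by
          rw [Finset.sum_congr rfl (fun i _ => by
            rw [MeasureTheory.Measure.addHaar_closedBall MeasureTheory.volume _ hhnn,
              finrank_euclideanSpace_fin]), Finset.sum_const, nsmul_eq_mul]
  -- extract the real inequality
  have hreal : lam ^ d * VX ≤ (S.card : ℝ) * (h ^ d * VB) := by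
    have hfin : (S.card : ENNReal) * (ENNReal.ofReal (h ^ d) *
        MeasureTheory.volume (Metric.ball (0 : EuclideanSpace ℝ (Fin d)) 1)) ≠ ⊤ := by
      refine ENNReal.mul_ne_top (by simp) (ENNReal.mul_ne_top (by simp)
        MeasureTheory.measure_ball_lt_top.ne)
    have := ENNReal.toReal_mono hfin key
    rwa [ENNReal.toReal_mul, ENNReal.toReal_mul, ENNReal.toReal_mul,
      ENNReal.toReal_ofReal (pow_nonneg hlampos.le d),
      ENNReal.toReal_ofReal (pow_nonneg hhnn d), ENNReal.toReal_natCast] at this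
  have hklam : k * ℓ ≤ lam := by
    refine le_min ?_ ?_
    · calc k * ℓ ≤ (1 / ℓ0) * ℓ :=
            mul_le_mul_of_nonneg_right (min_le_left _ _) hℓ.le
        _ ≤ (1 / ℓ0) * ℓ0 := by
            exact mul_le_mul_of_nonneg_left hℓle (by positivity)
        _ = 1 := by field_simp
    · calc k * ℓ ≤ (ε / (2 * D)) * ℓ :=
            mul_le_mul_of_nonneg_right (min_le_right _ _) hℓ.le
        _ = r / D := by rw [hrdef]; field_simp
  have hcard : k ^ d * ℓ ^ d * VX / (h ^ d * VB) ≤ (S.card : ℝ) := by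
    rw [div_le_iff₀ (by positivity)]
    calc k ^ d * ℓ ^ d * VX = (k * ℓ) ^ d * VX := by rw [mul_pow]
      _ ≤ lam ^ d * VX := by
          refine mul_le_mul_of_nonneg_right (pow_le_pow_left₀ (by positivity) hklam d)
            hVXpos.le
      _ ≤ (S.card : ℝ) * (h ^ d * VB) := hreal
  have heqfin : c * k ^ d * VX / VB * ℓ ^ d / h ^ d
      = c * (k ^ d * ℓ ^ d * VX / (h ^ d * VB)) := by
    field_simp
  rw [heqfin]
  exact le_trans (mul_le_mul_of_nonneg_left hcard hc.le) step1
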